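/- Implicit inflation target of a Taylor rule: (i) for every real π, the identity π*·R* + θ·(π − π*) = π̃·R̃ + θ·(π − π̃) holds with π̃ := π*·(θ − R*)/(θ − R̃); and (ii) if moreover π* > 0 and R* < R̃ < θ, then π̃ > π*. (If the true debt-dependent natural rate R̃ exceeds the intercept-consistent rate R*, a central bank sticking to its Taylor rule de facto operates with a strictly higher implicit inflation target.) -/
import Mathlib


/-- Implicit inflation target of a Taylor rule: (i) the Taylor rule can be
rewritten around the implicit target π̃ = π*·(θ−R*)/(θ−R̃); (ii) if π* > 0 and
R* < R̃ < θ, then π̃ > π*. -/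
theorem stmt_19 (πstar Rstar Rtilde θ : ℝ) (hθ : θ ≠ Rtilde) :
    (∀ π : ℝ,
      πstar * Rstar + θ * (π - πstar)
        = (πstar * (θ - Rstar) / (θ - Rtilde)) * Rtilde
          + θ * (π - πstar * (θ - Rstar) / (θ - Rtilde))) ∧
    (πstar > 0 → Rstar < Rtilde → Rtilde < θ →
      πstar * (θ - Rstar) / (θ - Rtilde) > πstar) := by
  have hne : θ - Rtilde ≠ 0 := sub_ne_zero.mpr hθ
  constructor
  · intro π
    field_simp
    ring
  · intro h1 h2 h3
    rw [gt_iff_lt, lt_div_iff₀ (by linarith)]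
    nlinarith
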